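/- Assume the flexible Arnoldi relations M Z_m = V_{m+1} H̄_m and K Z_m + M Z_m T_m = V_m hold with V_{m+1} having orthonormal columns, and that H_m(σ; T_m) is invertible. Let the flexible FOM solution be y_m = H_m(σ; T_m)^{-1} β e_1 for β > 0, x_m = Z_m y_m, and r_m(σ) = β v_1 − (K + σM) x_m where v_1 is the first column of V_{m+1}. Then r_m(σ) = −(σ − τ_m) h_{m+1,m} (e_m^* H_m(σ; T_m)^{-1} β e_1) v_{m+1}; in particular ‖r_m(σ)‖₂ = |σ − τ_m| · |h_{m+1,m}| · |e_m^* H_m(σ; T_m)^{-1} β e_1|. -/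

import Mathlib

open Matrix

noncomputable def norm2 {n : ℕ} (x : Fin n → ℂ) : ℝ :=
  ‖(WithLp.equiv 2 (Fin n → ℂ)).symm x‖

theorem stmt8 {n m : ℕ} (K M : Matrix (Fin n) (Fin n) ℂ)
    (Z : Matrix (Fin n) (Fin (m + 1)) ℂ) (V : Matrix (Fin n) (Fin (m + 2)) ℂ)
    (hV : Vᴴ * V = 1)
    (H : Matrix (Fin (m + 2)) (Fin (m + 1)) ℂ) (τs : Fin (m + 1) → ℂ)
    (σ : ℂ) (β : ℝ) (hβ : 0 < β)
    (h1 : M * Z = V * H)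
    (h2 : K * Z + M * Z * Matrix.diagonal τs = V.submatrix id Fin.castSucc)
    (hH : ∀ j : Fin (m + 1), j ≠ Fin.last m → H (Fin.last (m + 1)) j = 0)
    (Hσ : Matrix (Fin (m + 1)) (Fin (m + 1)) ℂ)
    (hHσ : Hσ = 1 + H.submatrix Fin.castSucc id * (σ • 1 - Matrix.diagonal τs))
    (hinv : IsUnit Hσ)
    (y : Fin (m + 1) → ℂ)
    (hy : y = Hσ⁻¹ *ᵥ ((β : ℂ) • (Pi.single 0 1 : Fin (m + 1) → ℂ))) :
    ((β : ℂ) • (fun i => V i 0) - (K + σ • M) *ᵥ (Z *ᵥ y) =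
        -((σ - τs (Fin.last m)) * H (Fin.last (m + 1)) (Fin.last m) *
            y (Fin.last m)) • fun i => V i (Fin.last (m + 1))) ∧
      norm2 ((β : ℂ) • (fun i => V i 0) - (K + σ • M) *ᵥ (Z *ᵥ y)) =
        ‖σ - τs (Fin.last m)‖ *
          ‖H (Fin.last (m + 1)) (Fin.last m)‖ *
          ‖y (Fin.last m)‖ := by
  set c : ℂ := (σ - τs (Fin.last m)) * H (Fin.last (m + 1)) (Fin.last m) * y (Fin.last m) with hc
  -- Hσ y = β e₁
  have hHy : Hσ *ᵥ y = (β : ℂ) • (Pi.single 0 1 : Fin (m + 1) → ℂ) := by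
    rw [hy, mulVec_mulVec, Matrix.mul_nonsing_inv _ ((Matrix.isUnit_iff_isUnit_det _).mp hinv),
      one_mulVec]
  set s : Fin (m + 1) → ℂ := (σ • 1 - Matrix.diagonal τs) *ᵥ y with hs
  have hsj : ∀ j, s j = (σ - τs j) * y j := by
    intro j
    simp [hs, sub_mulVec, mulVec_diagonal, smul_mulVec, one_mulVec, sub_mul,
      Pi.smul_apply, smul_eq_mul]
  -- key component identity
  have hcomp : ∀ i : Fin (m + 1), y i + (H.submatrix Fin.castSucc id *ᵥ s) i
      = (β : ℂ) * (Pi.single 0 1 : Fin (m + 1) → ℂ) i := by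
    intro i
    have := congrFun hHy i
    rw [hHσ] at this
    simpa [add_mulVec, one_mulVec, ← hs, ← mulVec_mulVec, Pi.smul_apply, smul_eq_mul] using this
  -- (K + σM) Z = V_m + V H (σ - T)
  have h2' : K * Z = V.submatrix id Fin.castSucc - M * Z * Matrix.diagonal τs :=
    eq_sub_of_add_eq h2
  have hKZ : (K + σ • M) * Z
      = V.submatrix id Fin.castSucc + V * H * (σ • 1 - Matrix.diagonal τs) := by
    rw [Matrix.add_mul, h2', Matrix.smul_mul, h1, Matrix.mul_sub, Matrix.mul_smul, Matrix.mul_one]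
    abel
  -- residual as V *ᵥ u
  have hres : (β : ℂ) • (fun i => V i 0) - (K + σ • M) *ᵥ (Z *ᵥ y)
      = -c • fun i => V i (Fin.last (m + 1)) := by
    have hV0 : (fun i => V i 0) = V *ᵥ (Pi.single 0 1 : Fin (m + 2) → ℂ) := by
      funext i; simp [mulVec_single]
    have hVm : (V.submatrix id Fin.castSucc) *ᵥ y = V *ᵥ (Fin.snoc y 0) := by
      funext i
      simp [mulVec, dotProduct, Fin.sum_univ_castSucc, Fin.snoc_castSucc, Fin.snoc_last,
        submatrix_apply, mul_zero, add_zero]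
    have hHs : (H *ᵥ s) = Fin.snoc (H.submatrix Fin.castSucc id *ᵥ s)
        (H (Fin.last (m + 1)) (Fin.last m) * s (Fin.last m)) := by
      funext j
      refine Fin.lastCases ?_ (fun i => ?_) j
      · rw [Fin.snoc_last, mulVec, dotProduct]
        rw [Finset.sum_eq_single (Fin.last m)]
        · intro b _ hb; rw [hH b hb, zero_mul]
        · intro hb; exact absurd (Finset.mem_univ _) hb
      · rw [Fin.snoc_castSucc, mulVec, mulVec, dotProduct, dotProduct]
        simp [submatrix_apply]
    have hu : (β : ℂ) • (Pi.single 0 1 : Fin (m + 2) → ℂ) - Fin.snoc y 0 - H *ᵥ s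
        = Pi.single (Fin.last (m + 1)) (-c) := by
      funext j
      refine Fin.lastCases ?_ (fun i => ?_) j
      · have h0 : (Fin.last (m + 1)) ≠ 0 := by
          simp [Fin.ext_iff, Fin.last]
        rw [hHs]
        simp only [Pi.sub_apply, Pi.smul_apply, Fin.snoc_last, Pi.single_eq_same,
          Pi.single_apply, if_neg h0, smul_zero, zero_sub, zero_sub]
        rw [hsj, hc]; ring
      · have hne : (Fin.castSucc i : Fin (m + 2)) ≠ Fin.last (m + 1) := by
          simp [Fin.ext_iff, Fin.castSucc, Fin.last, Fin.is_lt i |>.ne]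
        rw [hHs]
        have h0 : ((Fin.castSucc i : Fin (m + 2)) = 0) ↔ (i = 0) := by
          exact Fin.castSucc_eq_zero_iff
        simp only [Pi.sub_apply, Pi.smul_apply, Fin.snoc_castSucc, Pi.single_apply,
          if_neg hne, h0]
        have := hcomp i
        simp only [Pi.single_apply] at this
        rw [smul_eq_mul, sub_sub, this]
        ring
    calc (β : ℂ) • (fun i => V i 0) - (K + σ • M) *ᵥ (Z *ᵥ y)
        = V *ᵥ ((β : ℂ) • (Pi.single 0 1 : Fin (m + 2) → ℂ) - Fin.snoc y 0 - H *ᵥ s) := by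
          rw [mulVec_mulVec, hKZ, add_mulVec, hVm, hV0, ← mulVec_mulVec, ← hs,
            ← mulVec_mulVec, mulVec_sub, mulVec_sub, mulVec_smul, sub_add_eq_sub_sub]
      _ = -c • fun i => V i (Fin.last (m + 1)) := by
          rw [hu]; funext i; simp [mulVec_single, mul_comm]
  refine ⟨hres, ?_⟩
  rw [hres]
  -- norm computation
  have hcol : norm2 (fun i => V i (Fin.last (m + 1))) = 1 := by
    have := congrFun (congrFun hV (Fin.last (m + 1))) (Fin.last (m + 1))
    rw [Matrix.mul_apply, Matrix.one_apply_eq] at this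
    have hsum : ∑ i, ‖V i (Fin.last (m + 1))‖ ^ 2 = 1 := by
      have : (∑ i, ((Complex.normSq (V i (Fin.last (m + 1)))) : ℂ)) = 1 := by
        rw [← this]
        congr 1; funext i
        simp [conjTranspose_apply, Complex.normSq_eq_conj_mul_self]
      have h2 := congrArg Complex.re this
      simp only [Complex.re_sum, Complex.ofReal_re, Complex.one_re] at h2
      rw [← h2]
      congr 1; funext i
      rw [Complex.sq_norm]
    rw [norm2, EuclideanSpace.norm_eq]
    simp only [WithLp.equiv_symm_apply, WithLp.ofLp_toLp]
    rw [hsum]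
    exact Real.sqrt_one
  have hsmul : norm2 (-c • fun i => V i (Fin.last (m + 1)))
      = ‖-c‖ * norm2 (fun i => V i (Fin.last (m + 1))) := by
    rw [norm2, norm2]
    have h : ((WithLp.equiv 2 (Fin n → ℂ)).symm (-c • fun i => V i (Fin.last (m + 1))))
        = -c • ((WithLp.equiv 2 (Fin n → ℂ)).symm (fun i => V i (Fin.last (m + 1)))) := rfl
    rw [h, norm_smul]
  rw [hsmul, hcol, mul_one, norm_neg, hc, norm_mul, norm_mul]
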